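/- Let X(1), X(2), … be a sequence of real m×n matrices admitting a minimal realization of dimension d: there exist A ∈ ℝ^{m×d}, B ∈ ℝ^{d×d}, C ∈ ℝ^{d×n} with X(t+1) = A·B^t·C for all t ≥ 0, such that the controllability matrix obtained by stacking the rows A, AB, …, AB^{d−1} has rank d and the observability matrix obtained by concatenating the columns C, BC, …, B^{d−1}C has rank d. Let r = sup over t ≥ 1 of rank X(t). Then for every l ≥ d − r, the block Hankel matrix H^(1;l) has rank exactly d. (Lemma 1, rank statement.) -/
import Mathlib


/-- The block Hankel matrix `H^(t;k)` of a sequence of `m×n` matrices `X(1), X(2), …`: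
the `(k+1)×(k+1)` block matrix whose `(i,j)` block is `X(t+i+j)` for `0 ≤ i,j ≤ k`. -/
def blockHankel {m n : ℕ} (X : ℕ → Matrix (Fin m) (Fin n) ℝ) (t k : ℕ) :
    Matrix (Fin (k + 1) × Fin m) (Fin (k + 1) × Fin n) ℝ :=
  Matrix.of fun p q => X (t + (p.1 : ℕ) + (q.1 : ℕ)) p.2 q.2

/-- The controllability matrix of a realization `(A, B, C)`: the matrix obtained by
stacking the rows of `A, AB, …, AB^{d-1}`. -/
def controllabilityMatrix {m d : ℕ} (A : Matrix (Fin m) (Fin d) ℝ)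
    (B : Matrix (Fin d) (Fin d) ℝ) : Matrix (Fin d × Fin m) (Fin d) ℝ :=
  Matrix.of fun p c => (A * B ^ (p.1 : ℕ)) p.2 c

/-- The observability matrix of a realization `(A, B, C)`: the matrix obtained by
concatenating the columns of `C, BC, …, B^{d-1}C`. -/
def observabilityMatrix {n d : ℕ} (B : Matrix (Fin d) (Fin d) ℝ)
    (C : Matrix (Fin d) (Fin n) ℝ) : Matrix (Fin d) (Fin d × Fin n) ℝ :=
  Matrix.of fun c q => (B ^ (q.1 : ℕ) * C) c q.2

open Matrix Submodule LinearMap Module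

noncomputable section ObsAux

variable {d n : ℕ} (B : Matrix (Fin d) (Fin d) ℝ) (C : Matrix (Fin d) (Fin n) ℝ)

/-- Range of `B^i * C`. -/
def obsR (i : ℕ) : Submodule ℝ (Fin d → ℝ) := LinearMap.range ((B ^ i * C).mulVecLin)

/-- Span of the columns of `C, BC, …, B^k C`. -/
def obsS (k : ℕ) : Submodule ℝ (Fin d → ℝ) := ⨆ i, ⨆ (_ : i ≤ k), obsR B C i

/-- Generalized observability matrix with `k+1` blocks. -/
def genObs (k : ℕ) : Matrix (Fin d) (Fin (k + 1) × Fin n) ℝ :=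
  Matrix.of fun c q => (B ^ (q.1 : ℕ) * C) c q.2

lemma obsR_succ (i : ℕ) : obsR B C (i + 1) = Submodule.map B.mulVecLin (obsR B C i) := by
  rw [obsR, obsR, pow_succ', Matrix.mul_assoc, Matrix.mulVecLin_mul, LinearMap.range_comp]

lemma obsR_le_obsS {i k : ℕ} (h : i ≤ k) : obsR B C i ≤ obsS B C k :=
  le_iSup₂ (f := fun i (_ : i ≤ k) => obsR B C i) i h

lemma obsS_le {k : ℕ} {T : Submodule ℝ (Fin d → ℝ)} (h : ∀ i ≤ k, obsR B C i ≤ T) :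
    obsS B C k ≤ T := iSup₂_le h

lemma obsS_mono {k k' : ℕ} (h : k ≤ k') : obsS B C k ≤ obsS B C k' :=
  obsS_le B C fun i hi => obsR_le_obsS B C (hi.trans h)

lemma map_obsS_le (k : ℕ) :
    Submodule.map B.mulVecLin (obsS B C k) ≤ obsS B C (k + 1) := by
  rw [obsS, Submodule.map_iSup]
  refine iSup_le fun i => ?_
  rw [Submodule.map_iSup]
  refine iSup_le fun hi => ?_
  rw [← obsR_succ]
  exact obsR_le_obsS B C (by omega)

lemma obsR_le_of_stab {k : ℕ} (hstab : obsS B C (k + 1) ≤ obsS B C k) (j : ℕ) :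
    obsR B C j ≤ obsS B C k := by
  induction j with
  | zero => exact obsR_le_obsS B C (Nat.zero_le k)
  | succ j ih =>
    rw [obsR_succ]
    exact le_trans (Submodule.map_mono ih) (le_trans (map_obsS_le B C k) hstab)

lemma obsMat_range_le (k : ℕ) (h : ∀ i : Fin d, obsR B C (i : ℕ) ≤ obsS B C k) :
    LinearMap.range (observabilityMatrix B C).mulVecLin ≤ obsS B C k := by
  rw [Matrix.range_mulVecLin]
  refine span_le.2 ?_
  rintro _ ⟨⟨i, q⟩, rfl⟩
  refine h i ?_
  rw [obsR, Matrix.range_mulVecLin]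
  exact subset_span ⟨q, rfl⟩

lemma obsS_le_range_genObs (k : ℕ) :
    obsS B C k ≤ LinearMap.range (genObs B C k).mulVecLin := by
  refine obsS_le B C fun i hi => ?_
  rw [obsR, Matrix.range_mulVecLin, Matrix.range_mulVecLin]
  refine span_mono ?_
  rintro _ ⟨q, rfl⟩
  exact ⟨(⟨i, by omega⟩, q), rfl⟩

lemma obsS_eq_top_of_obsMat_le {k : ℕ} (hobs : (observabilityMatrix B C).rank = d)
    (h : LinearMap.range (observabilityMatrix B C).mulVecLin ≤ obsS B C k) :
    obsS B C k = ⊤ := by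
  refine Submodule.eq_top_of_finrank_eq ?_
  rw [Module.finrank_fin_fun]
  refine le_antisymm (by simpa using (obsS B C k).finrank_le) ?_
  calc d = (observabilityMatrix B C).rank := hobs.symm
    _ ≤ finrank ℝ (obsS B C k) := Submodule.finrank_mono h

lemma obsS_growth (hobs : (observabilityMatrix B C).rank = d) {r : ℕ} (hr : r ≤ C.rank)
    (k : ℕ) : min d (r + k) ≤ finrank ℝ (obsS B C k) := by
  induction k with
  | zero =>
    have h0 : obsR B C 0 = LinearMap.range C.mulVecLin := by
      rw [obsR, pow_zero, Matrix.one_mul]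
    calc min d (r + 0) ≤ r := by omega
      _ ≤ C.rank := hr
      _ = finrank ℝ (obsR B C 0) := by rw [h0]; rfl
      _ ≤ finrank ℝ (obsS B C 0) := Submodule.finrank_mono (obsR_le_obsS B C le_rfl)
  | succ k ih =>
    by_cases hT : obsS B C k = ⊤
    · have : obsS B C (k + 1) = ⊤ :=
        le_antisymm le_top (hT ▸ obsS_mono B C (Nat.le_succ k))
      rw [this, finrank_top, Module.finrank_fin_fun]
      omega
    · have hlt : obsS B C k < obsS B C (k + 1) := by
        refine lt_of_le_of_ne (obsS_mono B C (Nat.le_succ k)) fun he => ?_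
        refine hT (obsS_eq_top_of_obsMat_le B C hobs (obsMat_range_le B C k fun i => ?_))
        exact obsR_le_of_stab B C he.ge (i : ℕ)
      have := Submodule.finrank_lt_finrank_of_lt hlt
      omega

lemma range_genObs_eq_top (hobs : (observabilityMatrix B C).rank = d)
    {r : ℕ} (hr : r ≤ C.rank) {l : ℕ} (hl : d ≤ r + l) :
    LinearMap.range (genObs B C l).mulVecLin = ⊤ := by
  refine Submodule.eq_top_of_finrank_eq ?_
  rw [Module.finrank_fin_fun]
  refine le_antisymm (by simpa using (LinearMap.range (genObs B C l).mulVecLin).finrank_le) ?_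
  have h1 := obsS_growth B C hobs hr l
  have h2 := Submodule.finrank_mono (obsS_le_range_genObs B C l)
  omega

lemma Matrix.rank_def' {α β : Type*} [Fintype β] (M : Matrix α β ℝ) :
    M.rank = finrank ℝ (LinearMap.range M.mulVecLin) := rfl

end ObsAux

/-- **Lemma 1 (rank statement).**
Let `X(1), X(2), …` admit a minimal realization of dimension `d`
(`X(t+1) = A·B^t·C` for all `t ≥ 0`, with controllability and observability matrices
of rank `d`), and let `r = sup_{t ≥ 1} rank X(t)`. Then for every `l ≥ d - r`,
the block Hankel matrix `H^(1;l)` has rank exactly `d`. -/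
theorem blockHankel_rank_eq_of_minimal (m n d : ℕ) (hm : 0 < m) (hn : 0 < n) (hd : 0 < d)
    (X : ℕ → Matrix (Fin m) (Fin n) ℝ)
    (A : Matrix (Fin m) (Fin d) ℝ) (B : Matrix (Fin d) (Fin d) ℝ)
    (C : Matrix (Fin d) (Fin n) ℝ)
    (hX : ∀ t : ℕ, X (t + 1) = A * B ^ t * C)
    (hctrl : (controllabilityMatrix A B).rank = d)
    (hobs : (observabilityMatrix B C).rank = d)
    (r : ℕ) (hr : r = ⨆ t : ℕ, (X (t + 1)).rank)
    (l : ℕ) (hl : d - r ≤ l) :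
    (blockHankel X 1 l).rank = d := by
  have hrC : r ≤ C.rank := by
    rw [hr]
    refine ciSup_le fun t => ?_
    rw [hX t]
    exact Matrix.rank_mul_le_right _ _
  have hrA : r ≤ Aᵀ.rank := by
    rw [Matrix.rank_transpose, hr]
    refine ciSup_le fun t => ?_
    rw [hX t]
    exact le_trans (Matrix.rank_mul_le_left _ _) (Matrix.rank_mul_le_left _ _)
  have hobsT : (observabilityMatrix Bᵀ Aᵀ).rank = d := by
    have he : observabilityMatrix Bᵀ Aᵀ = (controllabilityMatrix A B)ᵀ := by
      ext c p
      simp [observabilityMatrix, controllabilityMatrix, ← Matrix.transpose_pow,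
        ← Matrix.transpose_mul]
    rw [he, Matrix.rank_transpose, hctrl]
  have hld : d ≤ r + l := by omega
  have hO : LinearMap.range (genObs B C l).mulVecLin = ⊤ :=
    range_genObs_eq_top B C hobs hrC hld
  have hfac : blockHankel X 1 l = (genObs Bᵀ Aᵀ l)ᵀ * genObs B C l := by
    ext ⟨i, p⟩ ⟨j, q⟩
    rw [Matrix.mul_apply]
    simp only [blockHankel, genObs, Matrix.of_apply, Matrix.transpose_apply]
    rw [show (1 + (i : ℕ) + (j : ℕ)) = ((i : ℕ) + (j : ℕ)) + 1 by omega, hX]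
    have hcol : ∀ c, ((Bᵀ) ^ (i : ℕ) * Aᵀ) c p = (A * B ^ (i : ℕ)) p c := by
      intro c
      rw [← Matrix.transpose_pow, ← Matrix.transpose_mul, Matrix.transpose_apply]
    simp only [hcol]
    rw [← Matrix.mul_apply, pow_add, ← Matrix.mul_assoc, Matrix.mul_assoc]
  rw [Matrix.rank_def', hfac, Matrix.mulVecLin_mul, LinearMap.range_comp, hO,
    Submodule.map_top, ← Matrix.rank_def', Matrix.rank_transpose, Matrix.rank_def',
    range_genObs_eq_top Bᵀ Aᵀ hobsT hrA hld, finrank_top, Module.finrank_fin_fun]
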